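/- arXiv:1002.3024 — 7 statements merged into one kernel-verified Lean document; each statement's English description precedes it below -/
import Mathlib

section
/- Let x = (x_1,…,x_k) and y = (y_1,…,y_k) be two k-tuples of elements of the binary Hamming space H_n. There exist a permutation σ of the n coordinates and a translation vector t ∈ F_2^n such that y_i equals x_i with coordinates permuted by σ and then translated by t (simultaneously for all i = 1,…,k) if and only if the symmetrized weight distributions of x and y coincide, i.e. n_w(x) = n_w(y) for every w ∈ F_2^{k-1}. -/
/-- `nU u x` is the number of coordinates `j` where the column
`((x 0) j, …, (x k) j)` equals `u`. -/
def nU {n k : ℕ} (u : Fin k → ZMod 2) (x : Fin k → Fin n → ZMod 2) : ℕ :=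
  (Finset.univ.filter fun j : Fin n => ∀ i, x i j = u i).card

/-- The symmetrized weight distribution `n_w(x) = n_{0w}(x) + n_{1 w̄}(x)`. -/
def nSym {n k : ℕ} (w : Fin k → ZMod 2) (x : Fin (k + 1) → Fin n → ZMod 2) : ℕ :=
  nU (Fin.cons 0 w) x + nU (Fin.cons 1 (fun i => w i + 1)) x

private lemma zmod2_cases (a : ZMod 2) : a = 0 ∨ a = 1 := by revert a; decide

private lemma zmod2_aux1 : ∀ a : ZMod 2, a + 1 + 1 = a := by decide
private lemma zmod2_aux2 : ∀ a b : ZMod 2, a + 1 = b → a = b + 1 := by decide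
private lemma zmod2_aux3 : ∀ a b : ZMod 2, a = b + (a + b) := by decide
private lemma zmod2_aux4 : ∀ a b c d : ZMod 2, a + b = c + d → c = a + (d + b) := by decide
private lemma zmod2_aux5 : ∀ a b c : ZMod 2, (a + c) + (b + c) = a + b := by decide

lemma nSym_card {n k : ℕ} (w : Fin k → ZMod 2) (x : Fin (k + 1) → Fin n → ZMod 2) :
    nSym w x = (Finset.univ.filter fun j : Fin n =>
      ∀ i : Fin k, x i.succ j + x 0 j = w i).card := by
  classical
  unfold nSym nU
  rw [← Finset.card_union_of_disjoint]
  · rw [Finset.filter_union_right]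
    congr 1
    apply Finset.filter_congr
    intro j _
    simp only [Fin.forall_fin_succ, Fin.cons_zero, Fin.cons_succ]
    constructor
    · rintro (⟨h0, h⟩ | ⟨h0, h⟩) i
      · rw [h0, h i, add_zero]
      · rw [h0, h i, zmod2_aux1]
    · intro h
      rcases zmod2_cases (x 0 j) with h0 | h0
      · exact Or.inl ⟨h0, fun i => by have := h i; rwa [h0, add_zero] at this⟩
      · exact Or.inr ⟨h0, fun i => by
          have := h i; rw [h0] at this; exact zmod2_aux2 _ _ this⟩
  · rw [Finset.disjoint_left]
    intro j hj hj'
    simp only [Finset.mem_filter] at hj hj'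
    have h1 := hj.2 0
    have h2 := hj'.2 0
    rw [Fin.cons_zero] at h1 h2
    rw [h1] at h2
    exact absurd h2 (by decide)

/-- Two tuples of points of the Hamming space are in the same orbit under the
automorphism group (permutations of coordinates and translations) iff their
symmetrized weight distributions coincide. -/
theorem orbit_iff_symmetrized_weight_distribution {n k : ℕ}
    (x y : Fin (k + 1) → Fin n → ZMod 2) :
    (∃ σ : Equiv.Perm (Fin n), ∃ t : Fin n → ZMod 2,
        ∀ i j, y i j = x i (σ j) + t j) ↔
      ∀ w : Fin k → ZMod 2, nSym w x = nSym w y := by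
  classical
  constructor
  · rintro ⟨σ, t, h⟩ w
    rw [nSym_card, nSym_card]
    apply Finset.card_bij (fun j _ => σ.symm j)
    · intro a ha
      simp only [Finset.mem_filter, Finset.mem_univ, true_and] at ha ⊢
      intro i
      rw [h i.succ (σ.symm a), h 0 (σ.symm a), Equiv.apply_symm_apply, zmod2_aux5]
      exact ha i
    · intro a _ b _ hab
      exact σ.symm.injective hab
    · intro b hb
      refine ⟨σ b, ?_, by simp⟩
      simp only [Finset.mem_filter, Finset.mem_univ, true_and] at hb ⊢
      intro i
      have := hb i
      rw [h i.succ b, h 0 b, zmod2_aux5] at this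
      exact this
  · intro h
    set F : Fin n → (Fin k → ZMod 2) := fun j i => x i.succ j + x 0 j with hF
    set G : Fin n → (Fin k → ZMod 2) := fun j i => y i.succ j + y 0 j with hG
    have hfib : ∀ c, Nat.card (G ⁻¹' {c}) = Nat.card (F ⁻¹' {c}) := by
      intro c
      have key : ∀ (f : Fin n → (Fin k → ZMod 2)),
          Nat.card (f ⁻¹' {c}) =
            (Finset.univ.filter fun j => ∀ i, f j i = c i).card := by
        intro f
        have hset : f ⁻¹' {c} = {j | f j = c} := by ext j; simp
        rw [hset]
        rw [Nat.card_eq_fintype_card, Fintype.card_subtype]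
        congr 1
        apply Finset.filter_congr
        intro j _
        simp [funext_iff]
      rw [key, key]
      have hx := nSym_card c x
      have hy := nSym_card c y
      simp only [hF, hG]
      rw [h c, hy] at hx
      exact hx
    let σ : Fin n ≃ Fin n := Equiv.ofFiberEquiv
      (f := G) (g := F) (fun c => Classical.choice (Finite.card_eq.mp (hfib c)))
    have hσ : ∀ j, F (σ j) = G j := fun j => Equiv.ofFiberEquiv_map _ j
    refine ⟨σ, fun j => y 0 j + x 0 (σ j), fun i j => ?_⟩
    refine Fin.cases ?_ ?_ i
    · exact zmod2_aux3 _ _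
    · intro i
      have := congrFun (hσ j) i
      exact zmod2_aux4 _ _ _ _ this
end

section
/- Triangular inequality for the generalized Hamming distance: for all x_1,…,x_k ∈ H_n with k ≥ 2 and all y ∈ H_n, (k-1) · d(x_1,…,x_k) ≤ ∑_{i=1}^k d(x_1,…,x_{i-1}, y, x_{i+1},…,x_k), where in the i-th summand x_i is replaced by y. -/
/-- The generalized Hamming distance of a `k`-tuple of points of `H_n`:
the number of coordinates where the points are not all equal. -/
def gdist {n k : ℕ} (x : Fin k → Fin n → ZMod 2) : ℕ :=
  (Finset.univ.filter fun j : Fin n => ¬ ∀ i i' : Fin k, x i j = x i' j).card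

/-- Triangular inequality for the generalized Hamming distance:
`(k-1)·d(x₁,…,x_k) ≤ ∑ᵢ d(x₁,…,x_{i-1}, y, x_{i+1},…,x_k)`. -/
theorem gdist_triangle {n k : ℕ} (hk : 2 ≤ k)
    (x : Fin k → Fin n → ZMod 2) (y : Fin n → ZMod 2) :
    (k - 1) * gdist x ≤ ∑ i : Fin k, gdist (Function.update x i y) := by
  classical
  unfold gdist
  simp only [Finset.card_filter]
  rw [Finset.mul_sum, Finset.sum_comm]
  refine Finset.sum_le_sum fun j _ => ?_
  by_cases h : ∀ i i' : Fin k, x i j = x i' j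
  · rw [if_neg (not_not.2 h), mul_zero]
    exact Nat.zero_le _
  · rw [if_pos h, mul_one]
    set G := Finset.univ.filter fun i : Fin k =>
        ∀ a b : Fin k, Function.update x i y a j = Function.update x i y b j with hG
    have key : G.card ≤ 1 := by
      apply Finset.card_le_one.2
      intro i₁ h1 i₂ h2
      by_contra hne
      simp only [hG, Finset.mem_filter] at h1 h2
      apply h
      have e1 : ∀ a : Fin k, a ≠ i₁ → x a j = y j := by
        intro a ha
        have := h1.2 a i₁
        rwa [Function.update_of_ne ha, Function.update_self] at this
      have e2 : ∀ a : Fin k, a ≠ i₂ → x a j = y j := by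
        intro a ha
        have := h2.2 a i₂
        rwa [Function.update_of_ne ha, Function.update_self] at this
      have all : ∀ a : Fin k, x a j = y j := by
        intro a
        by_cases ha : a = i₁
        · exact ha ▸ e2 i₁ hne
        · exact e1 a ha
      intro i i'
      rw [all i, all i']
    have hsum : ∑ i : Fin k, (if ¬ ∀ a b : Fin k,
        Function.update x i y a j = Function.update x i y b j then 1 else 0) =
        k - G.card := by
      rw [← Finset.card_filter, Finset.filter_not, Finset.card_sdiff_of_subset (Finset.filter_subset _ _)]
      simp [hG]
    rw [hsum]
    omega
end

section
/- For all x_1, x_2, x_3 ∈ H_n, the radius of the triple equals the maximum of the radii of the pairs: r(x_1,x_2,x_3) = max( r(x_1,x_2), r(x_2,x_3), r(x_3,x_1) ) = max( ⌈d(x_1,x_2)/2⌉, ⌈d(x_2,x_3)/2⌉, ⌈d(x_3,x_1)/2⌉ ). -/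
/-- The radius of a `k`-tuple of points of `H_n`:
the smallest radius of a Hamming ball containing all the points,
i.e. `min_y max_i d(y, xᵢ)`. -/
def radius {n k : ℕ} (x : Fin k → Fin n → ZMod 2) : ℕ :=
  Finset.inf' Finset.univ Finset.univ_nonempty
    (fun y : Fin n → ZMod 2 => Finset.univ.sup fun i => hammingDist y (x i))

open Finset

variable {n : ℕ}

private lemma rt_hd (u v : Fin n → ZMod 2) :
    hammingDist u v = (Finset.univ.filter fun j => u j ≠ v j).card := rfl

private lemma z2 : ∀ α β γ : ZMod 2, (α ≠ β ↔ (α ≠ β ∧ β = γ) ∨ (β ≠ γ ∧ γ = α)) ∧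
    ¬((α ≠ β ∧ β = γ) ∧ (β ≠ γ ∧ γ = α)) := by decide

private lemma z3 : ∀ α β γ : ZMod 2, ((if β = γ then β else α) ≠ α ↔ (α ≠ β ∧ β = γ)) := by decide
private lemma z4 : ∀ α β γ : ZMod 2, ((if β = γ then β else α) ≠ β ↔ (β ≠ γ ∧ γ = α)) := by decide
private lemma z5 : ∀ α β γ : ZMod 2, ((if β = γ then β else α) ≠ γ ↔ (γ ≠ α ∧ α = β)) := by decide
private lemma z6 : ∀ α β γ : ZMod 2, (α ≠ β ∧ β = γ) → α ≠ γ := by decide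

private lemma rt_split (u v w : Fin n → ZMod 2) :
    hammingDist u v = (Finset.univ.filter fun j => u j ≠ v j ∧ v j = w j).card
      + (Finset.univ.filter fun j => v j ≠ w j ∧ w j = u j).card := by
  have hdisj : Disjoint (Finset.univ.filter fun j => u j ≠ v j ∧ v j = w j)
      (Finset.univ.filter fun j => v j ≠ w j ∧ w j = u j) := by
    rw [disjoint_left]
    intro j h1 h2
    simp only [mem_filter] at h1 h2
    exact (z2 (u j) (v j) (w j)).2 ⟨h1.2, h2.2⟩
  rw [rt_hd, ← card_union_of_disjoint hdisj]
  congr 1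
  ext j
  simp only [mem_filter, mem_union, mem_univ, true_and]
  exact (z2 (u j) (v j) (w j)).1

private lemma rt_radius_le {k : ℕ} (x : Fin k → Fin n → ZMod 2) (y : Fin n → ZMod 2) (m : ℕ)
    (h : ∀ i, hammingDist y (x i) ≤ m) : radius x ≤ m :=
  le_trans (Finset.inf'_le _ (Finset.mem_univ y)) (Finset.sup_le fun i _ => h i)

private lemma rt_pair_exists (u v : Fin n → ZMod 2) :
    ∃ y : Fin n → ZMod 2, hammingDist y u ≤ (hammingDist u v + 1) / 2 ∧
      hammingDist y v ≤ (hammingDist u v + 1) / 2 := by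
  have hcard : hammingDist u v = (Finset.univ.filter fun j => u j ≠ v j).card := rfl
  obtain ⟨T, hTD, hT⟩ := Finset.exists_subset_card_eq (s := Finset.univ.filter fun j => u j ≠ v j)
    (n := ((Finset.univ.filter fun j => u j ≠ v j).card + 1) / 2) (by omega)
  refine ⟨fun j => if j ∈ T then v j else u j, ?_, ?_⟩
  · have h1 : (Finset.univ.filter fun j => (if j ∈ T then v j else u j) ≠ u j) = T := by
      ext j
      by_cases hj : j ∈ T
      · have h := (mem_filter.mp (hTD hj)).2
        simp only [mem_filter, mem_univ, true_and, hj, if_pos, iff_true]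
        exact fun hh => h hh.symm
      · simp [hj]
    rw [rt_hd, h1, hT]
    omega
  · have h2 : (Finset.univ.filter fun j => (if j ∈ T then v j else u j) ≠ v j)
        = (Finset.univ.filter fun j => u j ≠ v j) \ T := by
      ext j
      by_cases hj : j ∈ T
      · simp [hj]
      · simp [hj, mem_sdiff]
    rw [rt_hd, h2, card_sdiff_of_subset hTD, hT]
    omega

private lemma rt_key (u v w : Fin n → ZMod 2) (M : ℕ)
    (huv : hammingDist u v ≤ 2 * M) (hwu : hammingDist w u ≤ 2 * M)
    (hb : (Finset.univ.filter fun j => v j ≠ w j ∧ w j = u j).card ≤ M)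
    (hc : (Finset.univ.filter fun j => w j ≠ u j ∧ u j = v j).card ≤ M) :
    ∃ y, hammingDist y u ≤ M ∧ hammingDist y v ≤ M ∧ hammingDist y w ≤ M := by
  have s1 := rt_split u v w
  have s2 := rt_split w u v
  obtain ⟨T, hTA, hT⟩ := Finset.exists_subset_card_eq (s := Finset.univ.filter fun j => u j ≠ v j ∧ v j = w j)
    (n := (Finset.univ.filter fun j => u j ≠ v j ∧ v j = w j).card - M) (Nat.sub_le _ _)
  have memA : ∀ j ∈ T, u j ≠ v j ∧ v j = w j := fun j hj => (mem_filter.mp (hTA hj)).2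
  refine ⟨fun j => if j ∈ T then u j else if v j = w j then v j else u j, ?_, ?_, ?_⟩
  · have e1 : (Finset.univ.filter fun j =>
        (if j ∈ T then u j else if v j = w j then v j else u j) ≠ u j)
        = (Finset.univ.filter fun j => u j ≠ v j ∧ v j = w j) \ T := by
      ext j
      by_cases hj : j ∈ T
      · simp [hj]
      · simp only [mem_filter, mem_univ, true_and, mem_sdiff, hj, if_neg, not_false_iff, and_true]
        generalize u j = α
        generalize v j = β
        generalize w j = γ
        revert α β γ
        decide
    rw [rt_hd, e1, card_sdiff_of_subset hTA, hT]
    omega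
  · have dBT : Disjoint (Finset.univ.filter fun j => v j ≠ w j ∧ w j = u j) T := by
      rw [disjoint_right]
      intro j hjT hjB
      exact (mem_filter.mp hjB).2.1 (memA j hjT).2
    have e2 : (Finset.univ.filter fun j =>
        (if j ∈ T then u j else if v j = w j then v j else u j) ≠ v j)
        = (Finset.univ.filter fun j => v j ≠ w j ∧ w j = u j) ∪ T := by
      ext j
      by_cases hj : j ∈ T
      · simp [hj, (memA j hj).1]
      · simp only [mem_filter, mem_univ, true_and, mem_union, hj, or_false]
        generalize u j = α
        generalize v j = β
        generalize w j = γ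
        revert α β γ
        decide
    rw [rt_hd, e2, card_union_of_disjoint dBT, hT]
    omega
  · have dCT : Disjoint (Finset.univ.filter fun j => w j ≠ u j ∧ u j = v j) T := by
      rw [disjoint_right]
      intro j hjT hjC
      exact (memA j hjT).1 (mem_filter.mp hjC).2.2
    have e3 : (Finset.univ.filter fun j =>
        (if j ∈ T then u j else if v j = w j then v j else u j) ≠ w j)
        = (Finset.univ.filter fun j => w j ≠ u j ∧ u j = v j) ∪ T := by
      ext j
      by_cases hj : j ∈ T
      · simp [hj, z6 (u j) (v j) (w j) (memA j hj)]
      · simp only [mem_filter, mem_univ, true_and, mem_union, hj, or_false]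
        generalize u j = α
        generalize v j = β
        generalize w j = γ
        revert α β γ
        decide
    rw [rt_hd, e3, card_union_of_disjoint dCT, hT]
    omega

private lemma rt_radius_pair (u v : Fin n → ZMod 2) :
    radius ![u, v] = (hammingDist u v + 1) / 2 := by
  apply le_antisymm
  · obtain ⟨y, h1, h2⟩ := rt_pair_exists u v
    apply rt_radius_le _ y
    intro i
    fin_cases i
    · simpa using h1
    · simpa using h2
  · apply Finset.le_inf'
    intro y _
    have h0 := Finset.le_sup (f := fun i => hammingDist y (![u, v] i)) (Finset.mem_univ 0)
    have h1 := Finset.le_sup (f := fun i => hammingDist y (![u, v] i)) (Finset.mem_univ 1)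
    simp only [Matrix.cons_val_zero, Matrix.cons_val_one, Matrix.head_cons] at h0 h1
    have t := hammingDist_triangle u y v
    rw [hammingDist_comm u y] at t
    omega

/-- The radius of three points is the maximum of the radii of the pairs,
which is the maximum of the ceilings of the half pairwise distances. -/
theorem radius_three {n : ℕ} (x₁ x₂ x₃ : Fin n → ZMod 2) :
    radius ![x₁, x₂, x₃] =
        max (radius ![x₁, x₂]) (max (radius ![x₂, x₃]) (radius ![x₃, x₁])) ∧
      radius ![x₁, x₂, x₃] =
        max ((hammingDist x₁ x₂ + 1) / 2)
          (max ((hammingDist x₂ x₃ + 1) / 2) ((hammingDist x₃ x₁ + 1) / 2)) := by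
  set M := max ((hammingDist x₁ x₂ + 1) / 2)
      (max ((hammingDist x₂ x₃ + 1) / 2) ((hammingDist x₃ x₁ + 1) / 2)) with hM
  have hM1 : (hammingDist x₁ x₂ + 1) / 2 ≤ M := le_max_left _ _
  have hM2 : (hammingDist x₂ x₃ + 1) / 2 ≤ M := le_trans (le_max_left _ _) (le_max_right _ _)
  have hM3 : (hammingDist x₃ x₁ + 1) / 2 ≤ M := le_trans (le_max_right _ _) (le_max_right _ _)
  have hmain : radius ![x₁, x₂, x₃] = M := by
    apply le_antisymm
    · -- upper bound
      have s12 := rt_split x₁ x₂ x₃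
      have s23 := rt_split x₂ x₃ x₁
      have s31 := rt_split x₃ x₁ x₂
      have h12 : hammingDist x₁ x₂ ≤ 2 * M := by omega
      have h23 : hammingDist x₂ x₃ ≤ 2 * M := by omega
      have h31 : hammingDist x₃ x₁ ≤ 2 * M := by omega
      have hcases : ((Finset.univ.filter fun j => x₂ j ≠ x₃ j ∧ x₃ j = x₁ j).card ≤ M ∧
            (Finset.univ.filter fun j => x₃ j ≠ x₁ j ∧ x₁ j = x₂ j).card ≤ M) ∨
          ((Finset.univ.filter fun j => x₃ j ≠ x₁ j ∧ x₁ j = x₂ j).card ≤ M ∧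
            (Finset.univ.filter fun j => x₁ j ≠ x₂ j ∧ x₂ j = x₃ j).card ≤ M) ∨
          ((Finset.univ.filter fun j => x₁ j ≠ x₂ j ∧ x₂ j = x₃ j).card ≤ M ∧
            (Finset.univ.filter fun j => x₂ j ≠ x₃ j ∧ x₃ j = x₁ j).card ≤ M) := by
        omega
      rcases hcases with ⟨h, h'⟩ | ⟨h, h'⟩ | ⟨h, h'⟩
      · obtain ⟨y, hy1, hy2, hy3⟩ := rt_key x₁ x₂ x₃ M h12 h31 h h'
        apply rt_radius_le _ y
        intro i
        fin_cases i
        · simpa using hy1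
        · simpa using hy2
        · simpa using hy3
      · obtain ⟨y, hy2, hy3, hy1⟩ := rt_key x₂ x₃ x₁ M h23 h12 h h'
        apply rt_radius_le _ y
        intro i
        fin_cases i
        · simpa using hy1
        · simpa using hy2
        · simpa using hy3
      · obtain ⟨y, hy3, hy1, hy2⟩ := rt_key x₃ x₁ x₂ M h31 h23 h h'
        apply rt_radius_le _ y
        intro i
        fin_cases i
        · simpa using hy1
        · simpa using hy2
        · simpa using hy3
    · -- lower bound
      apply Finset.le_inf'
      intro y _
      have h0 := Finset.le_sup (f := fun i => hammingDist y (![x₁, x₂, x₃] i)) (Finset.mem_univ 0)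
      have h1 := Finset.le_sup (f := fun i => hammingDist y (![x₁, x₂, x₃] i)) (Finset.mem_univ 1)
      have h2 := Finset.le_sup (f := fun i => hammingDist y (![x₁, x₂, x₃] i)) (Finset.mem_univ 2)
      simp only [Matrix.cons_val_zero, Matrix.cons_val_one, Matrix.head_cons,
        Matrix.cons_val_two, Matrix.tail_cons] at h0 h1 h2
      have t12 := hammingDist_triangle x₁ y x₂
      have t23 := hammingDist_triangle x₂ y x₃
      have t31 := hammingDist_triangle x₃ y x₁
      rw [hammingDist_comm x₁ y] at t12
      rw [hammingDist_comm x₂ y] at t23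
      rw [hammingDist_comm x₃ y] at t31
      rw [hM]
      refine max_le ?_ (max_le ?_ ?_) <;> omega
  refine ⟨?_, hmain⟩
  rw [rt_radius_pair, rt_radius_pair, rt_radius_pair, hmain]
end

section
/- Singleton-type bound: let k ≥ 2, 1 ≤ d ≤ n, and let C ⊆ H_n be a code such that every k-tuple of pairwise distinct elements of C has generalized Hamming distance at least d. Then card(C) ≤ (k-1) · 2^{n-d+1}. -/
/-- Singleton-type bound: if every `k`-tuple of pairwise distinct elements of
`C ⊆ H_n` has generalized Hamming distance at least `d`, then
`|C| ≤ (k-1)·2^{n-d+1}`. -/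
theorem singleton_bound {n k d : ℕ} (hk : 2 ≤ k) (hd1 : 1 ≤ d) (hdn : d ≤ n)
    (C : Finset (Fin n → ZMod 2))
    (h : ∀ x : Fin k → Fin n → ZMod 2, (∀ i, x i ∈ C) →
      Function.Injective x → d ≤ gdist x) :
    C.card ≤ (k - 1) * 2 ^ (n - d + 1) := by
  set m := n - d + 1 with hm
  have hmn : m ≤ n := by omega
  set π : (Fin n → ZMod 2) → (Fin m → ZMod 2) :=
    fun y j => y (Fin.castLE hmn j) with hπ
  -- each fiber of π on C has at most k-1 elements
  have hfiber : ∀ a ∈ C.image π, (C.filter fun y => π y = a).card ≤ k - 1 := by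
    intro a _
    by_contra hlt
    push_neg at hlt
    have hkcard : k ≤ (C.filter fun y => π y = a).card := by omega
    obtain ⟨t, hts, htc⟩ := Finset.exists_subset_card_eq hkcard
    set x : Fin k → Fin n → ZMod 2 :=
      fun i => (t.equivFin.symm (Fin.cast htc.symm i) : Fin n → ZMod 2) with hx
    have hxt : ∀ i, x i ∈ t := fun i => (t.equivFin.symm (Fin.cast htc.symm i)).2
    have hxmem : ∀ i, x i ∈ C := fun i => (Finset.mem_filter.mp (hts (hxt i))).1
    have hxfib : ∀ i, π (x i) = a := fun i => (Finset.mem_filter.mp (hts (hxt i))).2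
    have hinj : Function.Injective x := by
      intro i i' hii
      have := t.equivFin.symm.injective (Subtype.ext hii)
      simpa [Fin.ext_iff] using this
    have hle := h x hxmem hinj
    -- but gdist x ≤ d - 1 since all x i agree on first m coordinates
    have hsub : (Finset.univ.filter fun j : Fin n =>
        ¬ ∀ i i' : Fin k, x i j = x i' j) ⊆
        Finset.univ.filter fun j : Fin n => m ≤ (j : ℕ) := by
      intro j hj
      simp only [Finset.mem_filter, Finset.mem_univ, true_and] at hj ⊢
      by_contra hjm
      push_neg at hjm
      apply hj
      intro i i'
      have e1 := congrFun (hxfib i) ⟨(j : ℕ), hjm⟩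
      have e2 := congrFun (hxfib i') ⟨(j : ℕ), hjm⟩
      simp only [hπ] at e1 e2
      have : Fin.castLE hmn ⟨(j : ℕ), hjm⟩ = j := by
        ext; rfl
      rw [this] at e1 e2
      rw [e1, e2]
    have hcnt : (Finset.univ.filter fun j : Fin n => m ≤ (j : ℕ)).card = n - m := by
      have h1 : (Finset.univ.filter fun j : Fin n => (j : ℕ) < m) =
          (Finset.univ : Finset (Fin m)).image (Fin.castLE hmn) := by
        ext j
        simp only [Finset.mem_filter, Finset.mem_univ, true_and, Finset.mem_image]
        constructor
        · intro hj; exact ⟨⟨(j : ℕ), hj⟩, Fin.ext rfl⟩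
        · rintro ⟨i, -, rfl⟩; exact i.isLt
      have h2 : (Finset.univ.filter fun j : Fin n => (j : ℕ) < m).card = m := by
        rw [h1, Finset.card_image_of_injective _ (Fin.castLE_injective hmn)]
        simp
      have h3 := Finset.card_filter_add_card_filter_not
        (s := (Finset.univ : Finset (Fin n))) (p := fun j : Fin n => (j : ℕ) < m)
      simp only [Finset.card_univ, Fintype.card_fin] at h3
      have h4 : (Finset.univ.filter fun j : Fin n => ¬ (j : ℕ) < m) =
          Finset.univ.filter fun j : Fin n => m ≤ (j : ℕ) := by
        ext j; simp [Nat.not_lt]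
      rw [← h4]; omega
    have : gdist x ≤ n - m := by
      rw [gdist]
      calc _ ≤ (Finset.univ.filter fun j : Fin n => m ≤ (j : ℕ)).card :=
            Finset.card_le_card hsub
        _ = n - m := hcnt
    omega
  calc C.card ≤ (k - 1) * (C.image π).card :=
        Finset.card_le_mul_card_image (f := π) C (k - 1) hfiber
    _ ≤ (k - 1) * 2 ^ m := by
        apply Nat.mul_le_mul_left
        calc (C.image π).card ≤ Fintype.card (Fin m → ZMod 2) :=
              Finset.card_le_univ _
          _ = 2 ^ m := by simp
end

section
/- Hamming-type bound: let k ≥ 2, r ≥ 1, and let C ⊆ H_n be a code such that every k-tuple of pairwise distinct elements of C has radius at least r. Then card(C) · ∑_{j=0}^{r-1} binom(n, j) ≤ (k-1) · 2^n. -/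
open Finset

lemma card_norm_eq (n j : ℕ) :
    ({z : Fin n → ZMod 2 | hammingNorm z = j} : Finset _).card = n.choose j := by
  classical
  have hp := Finset.card_powersetCard j (Finset.univ : Finset (Fin n))
  rw [Finset.card_univ, Fintype.card_fin] at hp
  rw [← hp]
  refine Finset.card_bij (fun (z : Fin n → ZMod 2) _ => Finset.filter (fun i => z i ≠ 0) Finset.univ) ?_ ?_ ?_
  · intro z hz
    simp only [Finset.mem_filter, Finset.mem_univ, true_and] at hz
    simp [Finset.mem_powersetCard_univ, ← hz, hammingNorm]
  · intro a ha b hb hab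
    funext i
    simp only [Finset.mem_filter, Finset.mem_univ, true_and] at *
    have := Finset.ext_iff.mp hab i
    simp only [Finset.mem_filter, Finset.mem_univ, true_and] at this
    by_cases h1 : a i = 0 <;> by_cases h2 : b i = 0 <;>
      first
      | (rw [h1, h2])
      | (have key : ∀ x : ZMod 2, x ≠ 0 → x = 1 := by decide
         rw [key _ h1, key _ h2])
      | (exfalso; revert this; simp [h1, h2])
  · intro s hs
    refine ⟨fun i => if i ∈ s then 1 else 0, ?_, ?_⟩
    · simp only [Finset.mem_filter, Finset.mem_univ, true_and, hammingNorm]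
      rw [Finset.mem_powersetCard_univ] at hs
      rw [← hs]
      congr 1
      ext i
      by_cases hi : i ∈ s <;> simp [hi]
    · ext i
      by_cases hi : i ∈ s <;> simp [hi]

lemma ball_card (n r : ℕ) (c : Fin n → ZMod 2) :
    (Finset.filter (fun y : Fin n → ZMod 2 => hammingDist y c < r) Finset.univ).card
      = ∑ j ∈ Finset.range r, n.choose j := by
  classical
  rw [Finset.card_eq_sum_card_fiberwise (f := fun y => hammingDist y c) (t := Finset.range r)
      (fun y hy => by simpa using (Finset.mem_filter.mp hy).2)]
  refine Finset.sum_congr rfl fun j hj => ?_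
  rw [Finset.mem_range] at hj
  have heq : Finset.filter (fun y => hammingDist y c = j)
        (Finset.filter (fun y : Fin n → ZMod 2 => hammingDist y c < r) Finset.univ)
      = Finset.filter (fun y : Fin n → ZMod 2 => hammingDist y c = j) Finset.univ := by
    ext y
    simp only [Finset.mem_filter, Finset.mem_univ, true_and]
    constructor
    · exact fun hy => hy.2
    · exact fun hy => ⟨hy ▸ hj, hy⟩
  rw [heq, ← card_norm_eq n j]
  refine Finset.card_bij' (fun y _ => y - c) (fun z _ => z + c) ?_ ?_ ?_ ?_
  · intro y hy
    rw [Finset.mem_filter] at hy ⊢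
    exact ⟨Finset.mem_univ _, by rw [sub_eq_neg_add, ← hammingDist_eq_hammingNorm, hammingDist_comm]; exact hy.2⟩
  · intro z hz
    rw [Finset.mem_filter] at hz ⊢
    refine ⟨Finset.mem_univ _, ?_⟩
    rw [hammingDist_comm, hammingDist_eq_hammingNorm]
    simpa using hz.2
  · intro y _; simp
  · intro z _; simp

lemma filter_card_le {n k r : ℕ} (hr : 1 ≤ r)
    (C : Finset (Fin n → ZMod 2))
    (h : ∀ x : Fin k → Fin n → ZMod 2, (∀ i, x i ∈ C) →
      Function.Injective x → r ≤ radius x) (y : Fin n → ZMod 2) :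
    (C.filter fun c => hammingDist y c < r).card ≤ k - 1 := by
  classical
  by_contra hlt
  push_neg at hlt
  have hkc : k ≤ (C.filter fun c => hammingDist y c < r).card := by omega
  obtain ⟨s, hsub, hcard⟩ := Finset.exists_subset_card_eq hkc
  set x : Fin k → Fin n → ZMod 2 :=
    fun i => ((Finset.equivFinOfCardEq hcard).symm i : Fin n → ZMod 2) with hx
  have hmem : ∀ i, (x i : Fin n → ZMod 2) ∈ Finset.filter (fun c => hammingDist y c < r) C :=
    fun i => hsub ((Finset.equivFinOfCardEq hcard).symm i).2
  have hinj : Function.Injective x := by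
    intro a b hab
    exact (Finset.equivFinOfCardEq hcard).symm.injective (Subtype.ext hab)
  have hrad := h x (fun i => (Finset.mem_filter.mp (hmem i)).1) hinj
  have hle : radius x ≤ r - 1 := by
    refine le_trans (Finset.inf'_le _ (Finset.mem_univ y)) ?_
    refine Finset.sup_le fun i _ => ?_
    have := (Finset.mem_filter.mp (hmem i)).2
    omega
  omega

/-- Hamming-type bound: if every `k`-tuple of pairwise distinct elements of
`C ⊆ H_n` has radius at least `r`, then `|C| · b_{r-1} ≤ (k-1)·2^n`,
where `b_{r-1} = ∑_{j=0}^{r-1} C(n,j)` is the cardinality of a Hamming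
ball of radius `r - 1`. -/
theorem hamming_type_bound {n k r : ℕ} (hk : 2 ≤ k) (hr : 1 ≤ r)
    (C : Finset (Fin n → ZMod 2))
    (h : ∀ x : Fin k → Fin n → ZMod 2, (∀ i, x i ∈ C) →
      Function.Injective x → r ≤ radius x) :
    C.card * ∑ j ∈ Finset.range r, Nat.choose n j ≤ (k - 1) * 2 ^ n := by
  classical
  calc C.card * ∑ j ∈ Finset.range r, Nat.choose n j
      = ∑ c ∈ C, (Finset.filter (fun y : Fin n → ZMod 2 => hammingDist y c < r) Finset.univ).card := by
        rw [Finset.sum_congr rfl fun c _ => ball_card n r c, Finset.sum_const, smul_eq_mul]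
    _ = ∑ c ∈ C, ∑ y : Fin n → ZMod 2, if hammingDist y c < r then 1 else 0 :=
        Finset.sum_congr rfl fun c _ => Finset.card_filter _ _
    _ = ∑ y : Fin n → ZMod 2, ∑ c ∈ C, if hammingDist y c < r then 1 else 0 := Finset.sum_comm
    _ = ∑ y : Fin n → ZMod 2, (C.filter fun c => hammingDist y c < r).card :=
        Finset.sum_congr rfl fun y _ => (Finset.card_filter _ _).symm
    _ ≤ ∑ _y : Fin n → ZMod 2, (k - 1) :=
        Finset.sum_le_sum fun y _ => filter_card_le hr C h y
    _ = (k - 1) * 2 ^ n := by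
        rw [Finset.sum_const, Finset.card_univ, smul_eq_mul, mul_comm]
        congr 1
        simp [Fintype.card_fun, ZMod.card]
end

section
/- Plotkin-type bound: let k ≥ 2 and let C ⊆ H_n be a code with M = card(C) ≥ k elements such that every k-tuple of pairwise distinct elements of C has generalized Hamming distance at least D. Then, as real numbers, D · ∏_{t=0}^{k-1}(M − t) ≤ n · ( ∏_{t=0}^{k-1}(M − t) − 2 · P ), where P = ∏_{t=0}^{k-1}(M/2 − t) if M/2 ≥ k−1 and P = 0 otherwise. (Equivalently, D/n ≤ 1 − 2·binom(M/2, k)/binom(M, k) with the generalized binomial coefficient binom(x,k) = j_k(x)/k!, j_k(x) = ∏_{t=0}^{k-1}(x−t) for x ≥ k−1 and j_k(x) = 0 for x ≤ k−1.) -/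
open Finset

private lemma prodlin_nonneg {k : ℕ} {a : ℝ} (ha : (k:ℝ) - 1 ≤ a) :
    0 ≤ ∏ t ∈ range k, (a - t) := by
  apply Finset.prod_nonneg
  intro t ht
  have := Finset.mem_range.mp ht
  have : (t:ℝ) ≤ (k:ℝ) - 1 := by
    have : (t:ℝ) + 1 ≤ k := by exact_mod_cast Nat.succ_le_of_lt this
    linarith
  linarith

private lemma prodlin_mono {k : ℕ} {a b : ℝ} (ha : (k:ℝ) - 1 ≤ a) (hab : a ≤ b) :
    ∏ t ∈ range k, (a - t) ≤ ∏ t ∈ range k, (b - t) := by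
  apply Finset.prod_le_prod
  · intro t ht
    have := Finset.mem_range.mp ht
    have : (t:ℝ) ≤ (k:ℝ) - 1 := by
      have : (t:ℝ) + 1 ≤ k := by exact_mod_cast Nat.succ_le_of_lt this
      linarith
    linarith
  · intro t _; linarith

private lemma midpoint_aux (k : ℕ) : ∀ a b : ℝ, (k:ℝ) - 1 ≤ a → (k:ℝ) - 1 ≤ b → a ≤ b →
    2 * ∏ t ∈ range k, ((a+b)/2 - t) ≤ (∏ t ∈ range k, (a - t)) + ∏ t ∈ range k, (b - t) := by
  induction k with
  | zero => intro a b _ _ _; simp; norm_num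
  | succ k ih =>
    intro a b ha hb hab
    have ha' : (k:ℝ) - 1 ≤ a := by push_cast at ha; linarith
    have hb' : (k:ℝ) - 1 ≤ b := by push_cast at hb; linarith
    have hc' : (k:ℝ) - 1 ≤ (a+b)/2 := by linarith
    have hak : (k:ℝ) ≤ a := by push_cast at ha; linarith
    have hbk : (k:ℝ) ≤ b := by push_cast at hb; linarith
    have IH := ih a b ha' hb' hab
    have hPa := prodlin_nonneg (k := k) ha'
    have hPb := prodlin_nonneg (k := k) hb'
    have hPc := prodlin_nonneg (k := k) hc'
    have hmono1 : ∏ t ∈ range k, ((a+b)/2 - t) ≤ ∏ t ∈ range k, (b - t) :=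
      prodlin_mono hc' (by linarith)
    rw [Finset.prod_range_succ, Finset.prod_range_succ, Finset.prod_range_succ]
    set Pa := ∏ t ∈ range k, (a - t)
    set Pb := ∏ t ∈ range k, (b - t)
    set Pc := ∏ t ∈ range k, ((a+b)/2 - t)
    have key : (Pb - Pc) * (b - k) ≥ (Pb - Pc) * (a - k) := by
      apply mul_le_mul_of_nonneg_left (by linarith) (by linarith)
    nlinarith [mul_le_mul_of_nonneg_right IH (show (0:ℝ) ≤ a - k by linarith)]

private lemma cast_descFactorial (m k : ℕ) :
    (m.descFactorial k : ℝ) = ∏ t ∈ range k, ((m:ℝ) - t) := by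
  rcases le_or_gt k m with hkm | hmk
  · rw [Nat.descFactorial_eq_prod_range, Nat.cast_prod]
    apply Finset.prod_congr rfl
    intro t ht
    have ht' : t ≤ m := le_trans (le_of_lt (Finset.mem_range.mp ht)) hkm
    rw [Nat.cast_sub ht']
  · rw [Nat.descFactorial_eq_zero_iff_lt.mpr hmk, Nat.cast_zero]
    symm
    apply Finset.prod_eq_zero (Finset.mem_range.mpr hmk)
    simp

private lemma case_small (k' a b : ℕ) (ha : a + 1 ≤ k')
    (hM : (k':ℝ) ≤ ((a:ℝ)+(b:ℝ))/2) :
    2 * ∏ t ∈ range (k'+1), (((a:ℝ)+(b:ℝ))/2 - t) ≤ ∏ t ∈ range (k'+1), ((b:ℝ) - t) := by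
  set c : ℝ := ((a:ℝ)+(b:ℝ))/2 with hc
  have hak : (a:ℝ) + 1 ≤ k' := by exact_mod_cast ha
  have hbc : c ≤ (b:ℝ) := by nlinarith
  have hck : (k':ℝ) - 1 ≤ c := by linarith
  rw [Finset.prod_range_succ, Finset.prod_range_succ]
  have h1 : ∏ t ∈ range k', (c - t) ≤ ∏ t ∈ range k', ((b:ℝ) - t) :=
    prodlin_mono hck hbc
  have h2 : 2 * (c - k') ≤ (b:ℝ) - k' := by
    have : 2 * c = (a:ℝ) + b := by rw [hc]; ring
    linarith
  have h3 : (0:ℝ) ≤ 2 * (c - k') := by linarith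
  have h4 : 0 ≤ ∏ t ∈ range k', ((b:ℝ) - t) := prodlin_nonneg (by linarith)
  calc 2 * ((∏ t ∈ range k', (c - t)) * (c - k'))
      = (∏ t ∈ range k', (c - t)) * (2 * (c - k')) := by ring
    _ ≤ (∏ t ∈ range k', ((b:ℝ) - t)) * ((b:ℝ) - k') :=
        mul_le_mul h1 h2 h3 h4

private lemma key_ineq (k a b M : ℕ) (hk : 2 ≤ k) (hab : a + b = M) :
    2 * (if ((k:ℝ) - 1) ≤ (M:ℝ)/2 then ∏ t ∈ range k, ((M:ℝ)/2 - t) else 0)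
      ≤ (a.descFactorial k : ℝ) + (b.descFactorial k : ℝ) := by
  have hMr : (M:ℝ) = (a:ℝ) + (b:ℝ) := by exact_mod_cast hab.symm
  split_ifs with hif
  · -- true branch
    rw [cast_descFactorial, cast_descFactorial]
    obtain ⟨k', rfl⟩ : ∃ k', k = k' + 1 := ⟨k - 1, by omega⟩
    have hk' : ((k':ℝ) + 1) - 1 = (k':ℝ) := by ring
    have hif' : (k':ℝ) ≤ ((a:ℝ)+(b:ℝ))/2 := by
      push_cast at hif; rw [hMr] at hif; linarith
    have hMr2 : (M:ℝ)/2 = ((a:ℝ)+(b:ℝ))/2 := by rw [hMr]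
    rw [hMr2]
    rcases le_or_gt (a+1) k' with hsa | hsa
    · have hz : a.descFactorial (k'+1) = 0 :=
        Nat.descFactorial_eq_zero_iff_lt.mpr (by omega)
      have hcs := case_small k' a b hsa hif'
      rw [← cast_descFactorial a, hz]
      push_cast
      linarith
    · rcases le_or_gt (b+1) k' with hsb | hsb
      · have hz : b.descFactorial (k'+1) = 0 :=
          Nat.descFactorial_eq_zero_iff_lt.mpr (by omega)
        have hif'' : (k':ℝ) ≤ ((b:ℝ)+(a:ℝ))/2 := by linarith
        have := case_small k' b a hsb hif''
        have hcomm : ((b:ℝ)+(a:ℝ))/2 = ((a:ℝ)+(b:ℝ))/2 := by ring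
        rw [hcomm] at this
        rw [← cast_descFactorial b, hz]
        push_cast
        linarith
    -- both large
      · have hka : ((k'+1:ℕ):ℝ) - 1 ≤ (a:ℝ) := by
          push_cast
          have : (k':ℝ) ≤ (a:ℝ) := by exact_mod_cast Nat.lt_succ_iff.mp (by omega)
          linarith
        have hkb : ((k'+1:ℕ):ℝ) - 1 ≤ (b:ℝ) := by
          push_cast
          have : (k':ℝ) ≤ (b:ℝ) := by exact_mod_cast Nat.lt_succ_iff.mp (by omega)
          linarith
        rcases le_total (a:ℝ) (b:ℝ) with hle | hle
        · exact midpoint_aux (k'+1) a b hka hkb hle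
        · have := midpoint_aux (k'+1) b a hkb hka hle
          have hcomm : ((b:ℝ)+(a:ℝ))/2 = ((a:ℝ)+(b:ℝ))/2 := by ring
          rw [hcomm] at this
          linarith
  · -- false branch
    have h1 : (0:ℝ) ≤ (a.descFactorial k : ℝ) := Nat.cast_nonneg _
    have h2 : (0:ℝ) ≤ (b.descFactorial k : ℝ) := Nat.cast_nonneg _
    linarith

private def embCodRestrict {α β : Type*} (p : β → Prop) :
    (α ↪ Subtype p) ≃ {e : α ↪ β // ∀ a, p (e a)} where
  toFun e := ⟨e.trans (Function.Embedding.subtype p), fun a => (e a).2⟩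
  invFun e := ⟨fun a => ⟨e.1 a, e.2 a⟩, fun a b hab => e.1.injective (congrArg Subtype.val hab)⟩
  left_inv e := by ext a; rfl
  right_inv e := by ext a; rfl

private lemma card_emb_filter {k : ℕ} {β : Type*} [Fintype β] [DecidableEq β]
    (p : β → Prop) [DecidablePred p] :
    (Finset.univ.filter fun e : Fin k ↪ β => ∀ i, p (e i)).card
      = (Finset.univ.filter (fun b => p b)).card.descFactorial k := by
  rw [← Fintype.card_subtype]
  rw [← Fintype.card_congr (embCodRestrict (α := Fin k) p)]
  rw [Fintype.card_embedding_eq, Fintype.card_subtype, Fintype.card_fin]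

private lemma card_val_filter {n : ℕ} (C : Finset (Fin n → ZMod 2)) (k : ℕ) (j : Fin n)
    (v : ZMod 2) :
    (Finset.univ.filter fun e : Fin k ↪ {x // x ∈ C} =>
        ∀ i, (e i : Fin n → ZMod 2) j = v).card
      = (C.filter fun c => c j = v).card.descFactorial k := by
  rw [card_emb_filter (fun b : {x // x ∈ C} => (b : Fin n → ZMod 2) j = v)]
  congr 1
  rw [← Fintype.card_subtype]
  rw [Fintype.card_congr (Equiv.subtypeSubtypeEquivSubtypeInter (· ∈ C) (fun x => x j = v))]
  rw [Fintype.card_subtype]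
  congr 1
  ext x
  simp [Finset.mem_filter]



/-- Plotkin-type bound: if `C ⊆ H_n` has `M ≥ k` elements and every `k`-tuple
of pairwise distinct elements of `C` has generalized Hamming distance at
least `D`, then `D · j_k(M) ≤ n · (j_k(M) - 2 · j_k(M/2))` where
`j_k(x) = ∏_{t=0}^{k-1}(x - t)` for `x ≥ k - 1` and `j_k(x) = 0` otherwise
(equivalently `D/n ≤ 1 - 2·C(M/2,k)/C(M,k)`). -/
theorem plotkin_type_bound {n k D : ℕ} (hk : 2 ≤ k)
    (C : Finset (Fin n → ZMod 2)) (hM : k ≤ C.card)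
    (h : ∀ x : Fin k → Fin n → ZMod 2, (∀ i, x i ∈ C) →
      Function.Injective x → D ≤ gdist x) :
    (D : ℝ) * ∏ t ∈ Finset.range k, ((C.card : ℝ) - t) ≤
      (n : ℝ) * ((∏ t ∈ Finset.range k, ((C.card : ℝ) - t)) -
        2 * (if ((k : ℝ) - 1) ≤ (C.card : ℝ) / 2 then
              ∏ t ∈ Finset.range k, ((C.card : ℝ) / 2 - t)
            else 0)) := by
  set M := C.card with hMdef
  set P : ℝ := if ((k : ℝ) - 1) ≤ (M : ℝ) / 2 then
      ∏ t ∈ Finset.range k, ((M : ℝ) / 2 - t) else 0 with hP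
  set F := M.descFactorial k with hFdef
  have hcardE : Fintype.card (Fin k ↪ {x // x ∈ C}) = F := by
    rw [Fintype.card_embedding_eq, Fintype.card_coe, Fintype.card_fin]
  -- Step 1: lower bound on the total sum
  have hDS : F * D ≤ ∑ e : Fin k ↪ {x // x ∈ C},
      gdist (fun i => (e i : Fin n → ZMod 2)) := by
    have hle : ∀ e ∈ (Finset.univ : Finset (Fin k ↪ {x // x ∈ C})),
        D ≤ gdist (fun i => (e i : Fin n → ZMod 2)) := by
      intro e _
      apply h
      · intro i; exact (e i).2
      · intro i i' hii
        exact e.injective (Subtype.val_injective hii)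
    have := Finset.card_nsmul_le_sum Finset.univ
      (fun e : Fin k ↪ {x // x ∈ C} => gdist (fun i => (e i : Fin n → ZMod 2))) D hle
    simpa [Finset.card_univ, hcardE, smul_eq_mul] using this
  -- Step 2: swap the two sums
  have hswap : ∑ e : Fin k ↪ {x // x ∈ C}, gdist (fun i => (e i : Fin n → ZMod 2))
      = ∑ j : Fin n, (Finset.univ.filter fun e : Fin k ↪ {x // x ∈ C} =>
          ¬ ∀ i i', (e i : Fin n → ZMod 2) j = (e i' : Fin n → ZMod 2) j).card := by
    simp only [gdist, Finset.card_filter]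
    rw [Finset.sum_comm]
  -- per-coordinate count of "all equal" tuples
  have hzm : ∀ a : ZMod 2, a = 0 ∨ a = 1 := by decide
  have hsplitP : ∀ j : Fin n,
      (Finset.univ.filter fun e : Fin k ↪ {x // x ∈ C} =>
          ∀ i i', (e i : Fin n → ZMod 2) j = (e i' : Fin n → ZMod 2) j).card
      = (C.filter fun c => c j = 0).card.descFactorial k
        + (C.filter fun c => c j = 1).card.descFactorial k := by
    intro j
    have i0 : Fin k := ⟨0, by omega⟩
    have hiff : ∀ e : Fin k ↪ {x // x ∈ C},
        (∀ i i', (e i : Fin n → ZMod 2) j = (e i' : Fin n → ZMod 2) j)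
        ↔ ((∀ i, (e i : Fin n → ZMod 2) j = 0) ∨ (∀ i, (e i : Fin n → ZMod 2) j = 1)) := by
      intro e
      constructor
      · intro hall
        rcases hzm ((e i0 : Fin n → ZMod 2) j) with h0 | h1
        · left; intro i; rw [hall i i0, h0]
        · right; intro i; rw [hall i i0, h1]
      · rintro (hv | hv) i i' <;> rw [hv i, hv i']
    rw [Finset.filter_congr (fun e _ => hiff e), Finset.filter_or,
      Finset.card_union_of_disjoint, card_val_filter, card_val_filter]
    refine Finset.disjoint_left.mpr ?_
    intro e h0 h1
    have h0' := (Finset.mem_filter.mp h0).2 i0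
    have h1' := (Finset.mem_filter.mp h1).2 i0
    rw [h0'] at h1'
    exact absurd h1' (by decide)
  -- total per-coordinate count
  have htot : ∀ j : Fin n,
      (Finset.univ.filter fun e : Fin k ↪ {x // x ∈ C} =>
          ¬ ∀ i i', (e i : Fin n → ZMod 2) j = (e i' : Fin n → ZMod 2) j).card
      + ((C.filter fun c => c j = 0).card.descFactorial k
          + (C.filter fun c => c j = 1).card.descFactorial k) = F := by
    intro j
    rw [← hsplitP j]
    rw [add_comm]
    rw [Finset.card_filter_add_card_filter_not]
    rw [Finset.card_univ, hcardE]
  -- the two filters partition C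
  have hab : ∀ j : Fin n,
      (C.filter fun c => c j = 0).card + (C.filter fun c => c j = 1).card = M := by
    intro j
    have h2 : (C.filter fun c => ¬ c j = 0) = (C.filter fun c => c j = 1) := by
      apply Finset.filter_congr
      intro c _
      rcases hzm (c j) with h0 | h0 <;> simp [h0]
    rw [← h2, Finset.card_filter_add_card_filter_not]
  -- per-coordinate real bound
  have perj : ∀ j : Fin n,
      (((Finset.univ.filter fun e : Fin k ↪ {x // x ∈ C} =>
          ¬ ∀ i i', (e i : Fin n → ZMod 2) j = (e i' : Fin n → ZMod 2) j).card : ℕ) : ℝ)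
        ≤ (F : ℝ) - 2 * P := by
    intro j
    have hkey := key_ineq k (C.filter fun c => c j = 0).card
      (C.filter fun c => c j = 1).card M hk (hab j)
    rw [hP]
    have hcast : (((Finset.univ.filter fun e : Fin k ↪ {x // x ∈ C} =>
        ¬ ∀ i i', (e i : Fin n → ZMod 2) j = (e i' : Fin n → ZMod 2) j).card : ℕ) : ℝ)
        = (F : ℝ) - (((C.filter fun c => c j = 0).card.descFactorial k : ℝ)
            + ((C.filter fun c => c j = 1).card.descFactorial k : ℝ)) := by
      have := htot j
      have : ((((Finset.univ.filter fun e : Fin k ↪ {x // x ∈ C} =>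
          ¬ ∀ i i', (e i : Fin n → ZMod 2) j = (e i' : Fin n → ZMod 2) j).card
          + ((C.filter fun c => c j = 0).card.descFactorial k
            + (C.filter fun c => c j = 1).card.descFactorial k) : ℕ)) : ℝ) = (F : ℝ) := by
        exact_mod_cast congrArg (Nat.cast : ℕ → ℝ) this
      push_cast at this
      linarith
    rw [hcast]
    linarith
  -- assemble
  calc (D : ℝ) * ∏ t ∈ Finset.range k, ((M : ℝ) - t)
      = ((F * D : ℕ) : ℝ) := by
        rw [Nat.cast_mul, hFdef, cast_descFactorial]; ring
    _ ≤ ((∑ e : Fin k ↪ {x // x ∈ C},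
          gdist (fun i => (e i : Fin n → ZMod 2)) : ℕ) : ℝ) := by exact_mod_cast hDS
    _ = ∑ j : Fin n, (((Finset.univ.filter fun e : Fin k ↪ {x // x ∈ C} =>
          ¬ ∀ i i', (e i : Fin n → ZMod 2) j = (e i' : Fin n → ZMod 2) j).card : ℕ) : ℝ) := by
        rw [hswap]; push_cast; rfl
    _ ≤ ∑ _j : Fin n, ((F : ℝ) - 2 * P) := Finset.sum_le_sum (fun j _ => perj j)
    _ = (n : ℝ) * ((F : ℝ) - 2 * P) := by
        rw [Finset.sum_const, Finset.card_univ, Fintype.card_fin, nsmul_eq_mul]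
    _ = (n : ℝ) * ((∏ t ∈ Finset.range k, ((M : ℝ) - t)) - 2 * P) := by
        rw [hFdef, cast_descFactorial]
end

section
/- Plotkin-type bound for linear codes and affine generalized distances: let k ≥ 2 and let C ⊆ H_n be an F_2-linear subspace with M = card(C) elements that contains at least one k-tuple of affinely independent elements, and suppose that every k-tuple of affinely independent elements of C has generalized Hamming distance at least D. Then D · 2^{k-1} · (M − 1) ≤ n · (2^{k-1} − 1) · M. (Equivalently, D/n ≤ (1 − 2^{-(k-1)}) · M/(M−1).) -/
open Module

lemma count_li {V : Type*} [AddCommGroup V] [Module (ZMod 2) V] [Finite V] (r : ℕ) :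
    Nat.card {v : Fin r → V // LinearIndependent (ZMod 2) v} =
      ∏ i : Fin r, (2 ^ (finrank (ZMod 2) V) - 2 ^ (i : ℕ)) := by
  by_cases hr : r ≤ finrank (ZMod 2) V
  · have := card_linearIndependent (K := ZMod 2) (V := V) hr
    simpa [ZMod.card] using this
  · push_neg at hr
    have hempty : IsEmpty {v : Fin r → V // LinearIndependent (ZMod 2) v} := by
      constructor; rintro ⟨v, hv⟩
      have := hv.fintype_card_le_finrank
      simp only [Fintype.card_fin] at this; omega
    rw [Nat.card_of_isEmpty]
    symm
    apply Finset.prod_eq_zero (Finset.mem_univ (⟨finrank (ZMod 2) V, hr⟩ : Fin r))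
    simp

lemma count_li_mem {V : Type*} [AddCommGroup V] [Module (ZMod 2) V] (K : Submodule (ZMod 2) V)
    (r : ℕ) :
    Nat.card {v : Fin r → V // LinearIndependent (ZMod 2) v ∧ ∀ i, v i ∈ K} =
      Nat.card {w : Fin r → K // LinearIndependent (ZMod 2) w} := by
  apply Nat.card_congr
  refine ⟨fun v => ⟨fun i => ⟨v.1 i, v.2.2 i⟩, ?_⟩,
    fun w => ⟨fun i => (w.1 i : V), w.2.map' K.subtype K.ker_subtype, fun i => (w.1 i).2⟩,
    fun v => Subtype.ext (funext fun i => rfl),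
    fun w => Subtype.ext (funext fun i => Subtype.ext rfl)⟩
  exact LinearIndependent.of_comp K.subtype v.2.1

def eSucc (r : ℕ) : Fin r ≃ {i : Fin (r+1) // i ≠ 0} where
  toFun := fun j => ⟨j.succ, Fin.succ_ne_zero j⟩
  invFun := fun i => i.1.pred (by simpa using i.2)
  left_inv := fun j => by simp
  right_inv := fun i => by ext; simp

lemma affine_of_li {n r : ℕ} {y : Fin r → Fin n → ZMod 2}
    (hy : LinearIndependent (ZMod 2) y) :
    AffineIndependent (ZMod 2) (Fin.cons (0 : Fin n → ZMod 2) y : Fin (r+1) → Fin n → ZMod 2) := by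
  rw [affineIndependent_iff_linearIndependent_vsub (ZMod 2) _ 0]
  rw [← linearIndependent_equiv (eSucc r)]
  convert hy using 1
  funext j
  simp only [Function.comp_apply]
  have he : ((eSucc r j : {i : Fin (r+1) // i ≠ 0}) : Fin (r+1)) = Fin.succ j := rfl
  rw [he]
  simp [vsub_eq_sub]
  all_goals rfl

lemma key_identity (m r : ℕ) (hm : 1 ≤ m) :
    ((2:ℤ)^m - 1) * 2^r * ∏ i ∈ Finset.range r, ((2:ℤ)^(m-1) - 2^i) =
      ((2:ℤ)^m - 2^r) * ∏ i ∈ Finset.range r, ((2:ℤ)^m - 2^i) := by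
  have h2 : (2:ℤ)^m = 2 * 2^(m-1) := by
    rw [← pow_succ']; congr 1; omega
  induction r with
  | zero => simp [h2]
  | succ r ih =>
    rw [Finset.prod_range_succ, Finset.prod_range_succ, pow_succ]
    rw [h2] at ih ⊢
    linear_combination (2 * ((2:ℤ)^(m-1) - 2^r)) * ih

/-- Plotkin-type bound for linear codes: if `C ⊆ H_n` is an `F₂`-linear code
with `M` elements containing `k` affinely independent elements, and every
`k`-tuple of affinely independent elements of `C` has generalized Hamming
distance at least `D`, then `D · 2^{k-1} · (M - 1) ≤ n · (2^{k-1} - 1) · M`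
(equivalently `D/n ≤ (1 - 2^{-(k-1)}) · M/(M-1)`). -/
theorem plotkin_type_bound_linear {n k D : ℕ} (hk : 2 ≤ k)
    (C : Submodule (ZMod 2) (Fin n → ZMod 2))
    (hex : ∃ x : Fin k → Fin n → ZMod 2,
      (∀ i, x i ∈ C) ∧ AffineIndependent (ZMod 2) x)
    (h : ∀ x : Fin k → Fin n → ZMod 2, (∀ i, x i ∈ C) →
      AffineIndependent (ZMod 2) x → D ≤ gdist x) :
    D * 2 ^ (k - 1) * (Nat.card C - 1) ≤ n * (2 ^ (k - 1) - 1) * Nat.card C := by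
  classical
  obtain ⟨r, rfl⟩ : ∃ r, k = r + 1 := ⟨k - 1, by omega⟩
  have hr1 : 1 ≤ r := by omega
  simp only [Nat.add_sub_cancel]
  obtain ⟨m, hm⟩ : ∃ m, m = finrank (ZMod 2) ↥C := ⟨_, rfl⟩
  -- the dimension is at least r
  have hrm : r ≤ m := by
    rw [hm]
    obtain ⟨x, hxC, hxa⟩ := hex
    rw [affineIndependent_iff_linearIndependent_vsub (ZMod 2) x 0] at hxa
    have hcomp := hxa.comp (eSucc r) (eSucc r).injective
    set y : Fin r → ↥C := fun j =>
      ⟨x ((eSucc r j : {i : Fin (r+1) // i ≠ 0}) : Fin (r+1)) - x 0,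
        C.sub_mem (hxC _) (hxC _)⟩ with hy
    have hyli : LinearIndependent (ZMod 2) y := by
      apply LinearIndependent.of_comp C.subtype
      convert hcomp using 1 <;> rfl
    simpa using hyli.fintype_card_le_finrank
  obtain ⟨N, hN⟩ : ∃ N, N = ∏ i : Fin r, (2 ^ m - 2 ^ (i:ℕ)) := ⟨_, rfl⟩
  obtain ⟨P, hP⟩ : ∃ P, P = ∏ i : Fin r, (2 ^ (m-1) - 2 ^ (i:ℕ)) := ⟨_, rfl⟩
  obtain ⟨T, hT⟩ : ∃ T : Finset (Fin r → ↥C),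
    T = Finset.univ.filter (fun v => LinearIndependent (ZMod 2) v) := ⟨_, rfl⟩
  have hTcard : T.card = N := by
    rw [hT, ← Fintype.card_subtype, ← Nat.card_eq_fintype_card, count_li, ← hm, ← hN]
  have hPN : P ≤ N := by
    rw [hP, hN]
    refine Finset.prod_le_prod' fun i _ => Nat.sub_le_sub_right ?_ _
    exact Nat.pow_le_pow_right (by norm_num) (by omega)
  have hNpos : 0 < N := by
    rw [hN]
    refine Finset.prod_pos fun i _ => ?_
    have : (i:ℕ) < m := lt_of_lt_of_le i.2 hrm
    have := Nat.pow_lt_pow_right (a := 2) (by norm_num) this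
    omega
  -- lower bound on the count of linearly independent tuples vanishing at j
  have hAj : ∀ j : Fin n,
      P ≤ (T.filter fun v => ∀ i : Fin r, (v i : Fin n → ZMod 2) j = 0).card := by
    intro j
    set K : Submodule (ZMod 2) ↥C :=
      LinearMap.ker ((LinearMap.proj j).comp C.subtype) with hK
    have e1 : (T.filter fun v => ∀ i : Fin r, (v i : Fin n → ZMod 2) j = 0).card
        = Nat.card {v : Fin r → ↥C //
            LinearIndependent (ZMod 2) v ∧ ∀ i, v i ∈ K} := by
      rw [Nat.card_eq_fintype_card, Fintype.card_subtype, hT, Finset.filter_filter]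
      apply congrArg
      apply Finset.filter_congr
      intro v _
      simp [hK, LinearMap.mem_ker]
    rw [e1, count_li_mem, count_li, hP]
    -- finrank of K is at least m - 1
    have hker : m - 1 ≤ finrank (ZMod 2) ↥K := by
      have hrn := LinearMap.finrank_range_add_finrank_ker ((LinearMap.proj j).comp C.subtype)
      have hle : finrank (ZMod 2) ↥(LinearMap.range ((LinearMap.proj j).comp C.subtype)) ≤ 1 := by
        have := Submodule.finrank_le (LinearMap.range ((LinearMap.proj j).comp C.subtype))
        simpa [Module.finrank_self] using this
      rw [hK]
      rw [← hm] at hrn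
      refine Nat.sub_le_iff_le_add.mpr ?_
      rw [← hrn, add_comm]
      exact Nat.add_le_add_left hle _
    refine Finset.prod_le_prod' fun i _ => Nat.sub_le_sub_right ?_ _
    exact Nat.pow_le_pow_right (by norm_num) hker
  -- the double counting inequality
  have hsum : D * N ≤ n * (N - P) := by
    have hlow : D * N ≤
        ∑ v ∈ T, gdist (Fin.cons 0 (fun i => (v i : Fin n → ZMod 2))) := by
      have : D * N = ∑ _v ∈ T, D := by
        rw [Finset.sum_const, hTcard, smul_eq_mul, mul_comm]
      rw [this]
      refine Finset.sum_le_sum fun v hv => ?_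
      have hvli : LinearIndependent (ZMod 2) v := by
        rw [hT] at hv; simpa using (Finset.mem_filter.mp hv).2
      have hmem : ∀ i : Fin (r+1),
          (Fin.cons (0 : Fin n → ZMod 2) (fun a => (v a : Fin n → ZMod 2)) :
            Fin (r+1) → Fin n → ZMod 2) i ∈ C := by
        intro i
        induction i using Fin.cases with
        | zero => simpa using C.zero_mem
        | succ a => simpa using (v a).2
      exact h _ hmem (affine_of_li (hvli.map' C.subtype C.ker_subtype))
    have hgd : ∀ v ∈ T, gdist (Fin.cons 0 (fun i => (v i : Fin n → ZMod 2))) =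
        (Finset.univ.filter fun j : Fin n =>
          ¬ ∀ i : Fin r, (v i : Fin n → ZMod 2) j = 0).card := by
      intro v _
      unfold gdist
      apply congrArg
      apply Finset.filter_congr
      intro j _
      rw [not_iff_not]
      constructor
      · intro H i
        have := H (Fin.succ i) 0
        simpa using this
      · intro H i i'
        have hz : ∀ i : Fin (r+1),
            (Fin.cons (0 : Fin n → ZMod 2) (fun i => (v i : Fin n → ZMod 2)) :
              Fin (r+1) → Fin n → ZMod 2) i j = 0 := by
          intro i
          refine Fin.cases ?_ (fun a => ?_) i
          · simp
          · simpa using H a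
        rw [hz i, hz i']
    calc D * N ≤ ∑ v ∈ T, gdist (Fin.cons 0 (fun i => (v i : Fin n → ZMod 2))) := hlow
      _ = ∑ v ∈ T, (Finset.univ.filter fun j : Fin n =>
            ¬ ∀ i : Fin r, (v i : Fin n → ZMod 2) j = 0).card :=
          Finset.sum_congr rfl hgd
      _ = ∑ v ∈ T, ∑ j : Fin n,
            (if ¬ ∀ i : Fin r, (v i : Fin n → ZMod 2) j = 0 then 1 else 0) :=
          Finset.sum_congr rfl fun v _ => Finset.card_filter _ _
      _ = ∑ j : Fin n, ∑ v ∈ T,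
            (if ¬ ∀ i : Fin r, (v i : Fin n → ZMod 2) j = 0 then 1 else 0) :=
          Finset.sum_comm
      _ = ∑ j : Fin n, (T.filter fun v =>
            ¬ ∀ i : Fin r, (v i : Fin n → ZMod 2) j = 0).card :=
          Finset.sum_congr rfl fun j _ => (Finset.card_filter _ _).symm
      _ ≤ ∑ _j : Fin n, (N - P) := by
          refine Finset.sum_le_sum fun j _ => ?_
          have h1 := Finset.card_filter_add_card_filter_not (s := T)
            (p := fun v => ∀ i : Fin r, (v i : Fin n → ZMod 2) j = 0)
          have hBA := Nat.eq_sub_of_add_eq' h1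
          rw [hBA, hTcard]
          exact Nat.sub_le_sub_left (hAj j) N
      _ = n * (N - P) := by simp [mul_comm]
  -- cast to ℤ and conclude
  have hM : Nat.card ↥C = 2 ^ m := by
    rw [Nat.card_eq_fintype_card, card_eq_pow_finrank (K := ZMod 2), ZMod.card, ← hm]
  have hNZ : (N : ℤ) = ∏ i ∈ Finset.range r, ((2:ℤ)^m - 2^i) := by
    rw [hN, ← Finset.prod_range (fun i => 2^m - 2^i), Nat.cast_prod]
    refine Finset.prod_congr rfl fun i hi => ?_
    have hi' : i < r := Finset.mem_range.mp hi
    rw [Nat.cast_sub (Nat.pow_le_pow_right (by norm_num) (by omega))]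
    push_cast; ring
  have hPZ : (P : ℤ) = ∏ i ∈ Finset.range r, ((2:ℤ)^(m-1) - 2^i) := by
    rw [hP, ← Finset.prod_range (fun i => 2^(m-1) - 2^i), Nat.cast_prod]
    refine Finset.prod_congr rfl fun i hi => ?_
    have hi' : i < r := Finset.mem_range.mp hi
    rw [Nat.cast_sub (Nat.pow_le_pow_right (by norm_num) (by omega))]
    push_cast; ring
  have hkey := key_identity m r (le_trans hr1 hrm)
  rw [← hNZ, ← hPZ] at hkey
  have h1 : (D:ℤ) * N ≤ (n:ℤ) * ((N:ℤ) - (P:ℤ)) := by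
    have := hsum
    zify [hPN] at this
    exact this
  have hfin : (D:ℤ) * 2^r * (2^m - 1) * N ≤ (n:ℤ) * ((2:ℤ)^r - 1) * 2^m * N := by
    calc (D:ℤ) * 2^r * (2^m - 1) * N = (2^r * ((2:ℤ)^m - 1)) * ((D:ℤ) * N) := by ring
      _ ≤ (2^r * ((2:ℤ)^m - 1)) * ((n:ℤ) * ((N:ℤ) - (P:ℤ))) := by
          refine mul_le_mul_of_nonneg_left h1 ?_
          have h2m : (1:ℤ) ≤ 2^m := by exact_mod_cast (Nat.one_le_two_pow : 1 ≤ 2^m)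
          exact mul_nonneg (by positivity) (by linarith)
      _ = (n:ℤ) * ((2:ℤ)^r - 1) * 2^m * N := by linear_combination (-(n:ℤ)) * hkey
  have hfinal : (D:ℤ) * 2^r * ((2:ℤ)^m - 1) ≤ (n:ℤ) * ((2:ℤ)^r - 1) * 2^m :=
    le_of_mul_le_mul_right hfin (by exact_mod_cast hNpos)
  rw [hM]
  have h2m : 1 ≤ 2^m := Nat.one_le_two_pow
  have h2r : 1 ≤ 2^r := Nat.one_le_two_pow
  zify [h2m, h2r]
  exact hfinal
end
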